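/- Let D be a directed graph, let c > 0, and let X, Y ⊆ V(D) be nonempty sets with e⃗(X, Y) ≥ c·|X|·|Y|. Then the subgraph of D induced on X ∪ Y contains a proper anti-directed path on at least (c/4)·min{|X|, |Y|} vertices. -/

import Mathlib

/-- The number of directed edges from `A` to `B`. -/
noncomputable def dirEdges {V : Type*} (E : V → V → Prop) (A B : Set V) : ℕ :=
  {p : V × V | p.1 ∈ A ∧ p.2 ∈ B ∧ E p.1 p.2}.ncard

/-- `f 0, f 1, …, f (2m-1)` is a proper anti-directed path in `E`:
the vertices are distinct and the even-indexed vertices are sources. -/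
def ProperADP {V : Type*} (E : V → V → Prop) (m : ℕ) (f : ℕ → V) : Prop :=
  0 < m ∧
  (∀ i j, i < 2 * m → j < 2 * m → f i = f j → i = j) ∧
  ∀ j, 2 * j + 1 < 2 * m →
    E (f (2 * j)) (f (2 * j + 1)) ∧
      (2 * j + 2 < 2 * m → E (f (2 * j + 2)) (f (2 * j + 1)))

set_option linter.unusedSectionVars false

section helpers
variable {V : Type} [Finite V] (E : V → V → Prop)

lemma dirEdges_single_left (a : V) (B : Set V) :
    dirEdges E {a} B = (B ∩ {b | E a b}).ncard := by
  rw [dirEdges]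
  have h : {p : V × V | p.1 ∈ ({a} : Set V) ∧ p.2 ∈ B ∧ E p.1 p.2}
      = (Prod.mk a) '' (B ∩ {b | E a b}) := by
    ext ⟨x, y⟩
    simp only [Set.mem_setOf_eq, Set.mem_singleton_iff, Set.mem_image, Set.mem_inter_iff,
      Prod.mk.injEq]
    constructor
    · rintro ⟨rfl, h1, h2⟩; exact ⟨y, ⟨h1, h2⟩, rfl, rfl⟩
    · rintro ⟨b, ⟨h1, h2⟩, rfl, rfl⟩; exact ⟨rfl, h1, h2⟩
  rw [h, Set.ncard_image_of_injective]
  intro x y hxy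
  exact congrArg Prod.snd hxy

lemma dirEdges_single_right (b : V) (A : Set V) :
    dirEdges E A {b} = (A ∩ {x | E x b}).ncard := by
  rw [dirEdges]
  have h : {p : V × V | p.1 ∈ A ∧ p.2 ∈ ({b} : Set V) ∧ E p.1 p.2}
      = (fun x => (x, b)) '' (A ∩ {x | E x b}) := by
    ext ⟨x, y⟩
    simp only [Set.mem_setOf_eq, Set.mem_singleton_iff, Set.mem_image, Set.mem_inter_iff,
      Prod.mk.injEq]
    constructor
    · rintro ⟨h1, rfl, h2⟩; exact ⟨x, ⟨h1, h2⟩, rfl, rfl⟩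
    · rintro ⟨x', ⟨h1, h2⟩, rfl, rfl⟩; exact ⟨h1, rfl, h2⟩
  rw [h, Set.ncard_image_of_injective]
  intro x y hxy
  exact congrArg Prod.fst hxy

lemma dirEdges_split_left {a : V} {A : Set V} (ha : a ∈ A) (B : Set V) :
    dirEdges E A B = dirEdges E {a} B + dirEdges E (A \ {a}) B := by
  rw [dirEdges, dirEdges, dirEdges]
  rw [← Set.ncard_union_eq]
  · congr 1
    ext ⟨x, y⟩
    simp only [Set.mem_setOf_eq, Set.mem_union, Set.mem_singleton_iff, Set.mem_diff]
    constructor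
    · rintro ⟨h1, h2, h3⟩
      by_cases hx : x = a
      · exact Or.inl ⟨hx, h2, h3⟩
      · exact Or.inr ⟨⟨h1, hx⟩, h2, h3⟩
    · rintro (⟨rfl, h2, h3⟩ | ⟨⟨h1, _⟩, h2, h3⟩)
      exacts [⟨ha, h2, h3⟩, ⟨h1, h2, h3⟩]
  · rw [Set.disjoint_left]
    rintro ⟨x, y⟩ ⟨h1, -, -⟩ ⟨h2, -, -⟩
    exact h2.2 h1

lemma dirEdges_split_right {b : V} {B : Set V} (hb : b ∈ B) (A : Set V) :
    dirEdges E A B = dirEdges E A {b} + dirEdges E A (B \ {b}) := by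
  rw [dirEdges, dirEdges, dirEdges]
  rw [← Set.ncard_union_eq]
  · congr 1
    ext ⟨x, y⟩
    simp only [Set.mem_setOf_eq, Set.mem_union, Set.mem_singleton_iff, Set.mem_diff]
    constructor
    · rintro ⟨h1, h2, h3⟩
      by_cases hy : y = b
      · exact Or.inl ⟨h1, hy, h3⟩
      · exact Or.inr ⟨h1, ⟨h2, hy⟩, h3⟩
    · rintro (⟨h1, rfl, h3⟩ | ⟨h1, ⟨h2, _⟩, h3⟩)
      exacts [⟨h1, hb, h3⟩, ⟨h1, h2, h3⟩]
  · rw [Set.disjoint_left]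
    rintro ⟨x, y⟩ ⟨-, h1, -⟩ ⟨-, h2, -⟩
    exact h2.2 h1



lemma deletion (k : ℕ) : ∀ (n : ℕ) (A B : Set V), A.ncard + B.ncard ≤ n →
    k * (A.ncard + B.ncard) < dirEdges E A B →
    ∃ A' B', A' ⊆ A ∧ B' ⊆ B ∧ k * (A'.ncard + B'.ncard) < dirEdges E A' B' ∧
      (∀ a ∈ A', k + 1 ≤ dirEdges E {a} B') ∧ (∀ b ∈ B', k + 1 ≤ dirEdges E A' {b}) := by
  intro n
  induction n with
  | zero =>
    intro A B hn he
    have hA : A.ncard = 0 := by omega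
    have : dirEdges E A B = 0 := by
      rw [dirEdges, Set.ncard_eq_zero (Set.toFinite _)]
      ext ⟨x, y⟩
      simp only [Set.mem_setOf_eq, Set.mem_empty_iff_false, iff_false]
      rintro ⟨h1, -, -⟩
      have := Set.ncard_eq_zero (Set.toFinite A) |>.1 hA
      rw [this] at h1; exact h1
    omega
  | succ n ih =>
    intro A B hn he
    by_cases hdeg : (∀ a ∈ A, k + 1 ≤ dirEdges E {a} B) ∧ (∀ b ∈ B, k + 1 ≤ dirEdges E A {b})
    · exact ⟨A, B, subset_rfl, subset_rfl, he, hdeg.1, hdeg.2⟩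
    · rw [not_and_or] at hdeg
      rcases hdeg with h | h
      · push_neg at h
        obtain ⟨a, ha, hdeg⟩ := h
        have hsplit := dirEdges_split_left E ha B
        have hcard : (A \ {a}).ncard = A.ncard - 1 := Set.ncard_diff_singleton_of_mem ha
        have hApos : 0 < A.ncard := (Set.ncard_pos (Set.toFinite A)).2 ⟨a, ha⟩
        have hsum : (A \ {a}).ncard + B.ncard + 1 = A.ncard + B.ncard := by omega
        have hk : k * ((A \ {a}).ncard + B.ncard) + k = k * (A.ncard + B.ncard) := by
          rw [← hsum]; ring
        obtain ⟨A', B', h1, h2, h3, h4, h5⟩ := ih (A \ {a}) B (by omega) (by omega)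
        exact ⟨A', B', h1.trans Set.diff_subset, h2, h3, h4, h5⟩
      · push_neg at h
        obtain ⟨b, hb, hdeg⟩ := h
        have hsplit := dirEdges_split_right E hb A
        have hcard : (B \ {b}).ncard = B.ncard - 1 := Set.ncard_diff_singleton_of_mem hb
        have hBpos : 0 < B.ncard := (Set.ncard_pos (Set.toFinite B)).2 ⟨b, hb⟩
        have hsum : A.ncard + (B \ {b}).ncard + 1 = A.ncard + B.ncard := by omega
        have hk : k * (A.ncard + (B \ {b}).ncard) + k = k * (A.ncard + B.ncard) := by
          rw [← hsum]; ring
        obtain ⟨A', B', h1, h2, h3, h4, h5⟩ := ih A (B \ {b}) (by omega) (by omega)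
        exact ⟨A', B', h1, h2.trans Set.diff_subset, h3, h4, h5⟩

lemma greedy (hloop : ∀ v, ¬ E v v) (k : ℕ) (A B : Set V)
    (hA : ∀ a ∈ A, k + 1 ≤ dirEdges E {a} B) (hB : ∀ b ∈ B, k + 1 ≤ dirEdges E A {b})
    (a0 : V) (ha0 : a0 ∈ A) :
    ∀ L, 1 ≤ L → L ≤ k + 2 → ∃ f : ℕ → V,
      (∀ i < L, if i % 2 = 0 then f i ∈ A else f i ∈ B) ∧
      (∀ i j, i < L → j < L → f i = f j → i = j) ∧
      (∀ i, i + 1 < L → if i % 2 = 0 then E (f i) (f (i + 1)) else E (f (i + 1)) (f i)) := by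
  intro L
  induction L with
  | zero => omega
  | succ L ih =>
    intro _ hL2
    rcases Nat.eq_or_lt_of_le (Nat.one_le_iff_ne_zero.2 (Nat.succ_ne_zero L)) with h1 | h1
    · -- L + 1 = 1, i.e. L = 0
      have hL0 : L = 0 := by omega
      subst hL0
      refine ⟨fun _ => a0, ?_, ?_, ?_⟩
      · intro i hi
        have : i = 0 := by omega
        subst this; simp [ha0]
      · intro i j hi hj _; omega
      · intro i hi; omega
    · -- L ≥ 1, extend a path of length L
      have hL1 : 1 ≤ L := by omega
      obtain ⟨f, hmem, hinj, hedge⟩ := ih hL1 (by omega)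
      set v := f (L - 1) with hv
      have fresh : ∀ S : Set V, k + 1 ≤ S.ncard → v ∉ S →
          ∃ b ∈ S, ∀ i < L, f i ≠ b := by
        intro S hS hvS
        by_contra hcon
        push_neg at hcon
        have hsub : S ⊆ f '' ↑(Finset.range (L - 1)) := by
          intro b hb
          obtain ⟨i, hi, hfi⟩ := hcon b hb
          have hne : i ≠ L - 1 := by
            rintro rfl
            rw [← hfi] at hb
            exact hvS hb
          exact ⟨i, by simp only [Finset.coe_range, Set.mem_Iio]; omega, hfi⟩
        have hle : S.ncard ≤ L - 1 := by
          calc S.ncard ≤ (f '' ↑(Finset.range (L - 1))).ncard :=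
                Set.ncard_le_ncard hsub (Set.toFinite _)
            _ ≤ (↑(Finset.range (L - 1)) : Set ℕ).ncard := Set.ncard_image_le (Set.toFinite _)
            _ = L - 1 := by rw [Set.ncard_coe_finset, Finset.card_range]
        omega
      have hvL : L - 1 < L := by omega
      by_cases hpar : (L - 1) % 2 = 0
      · -- v ∈ A, extend with an out-neighbour in B
        have hvA : v ∈ A := by have := hmem (L - 1) hvL; rwa [if_pos hpar] at this
        have hS : k + 1 ≤ (B ∩ {b | E v b}).ncard := by
          rw [← dirEdges_single_left]; exact hA v hvA
        obtain ⟨b, hbS, hbnew⟩ := fresh _ hS (by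
          rintro ⟨-, hEb⟩; exact hloop v hEb)
        refine ⟨fun i => if i = L then b else f i, ?_, ?_, ?_⟩
        · intro i hi
          by_cases hiL : i = L
          · have hodd : ¬ i % 2 = 0 := by omega
            rw [if_neg hodd]
            show (if i = L then b else f i) ∈ B
            rw [if_pos hiL]
            exact hbS.1
          · have hi' : i < L := by omega
            simp only [if_neg hiL]
            exact hmem i hi'
        · intro i j hi hj hij
          by_cases hiL : i = L <;> by_cases hjL : j = L
          · omega
          · subst hiL
            simp only [if_pos rfl, if_neg hjL] at hij
            exact absurd hij.symm (hbnew j (by omega))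
          · subst hjL
            simp only [if_neg hiL, if_pos rfl] at hij
            exact absurd hij (hbnew i (by omega))
          · simp only [if_neg hiL, if_neg hjL] at hij
            exact hinj i j (by omega) (by omega) hij
        · intro i hi
          by_cases hiL : i + 1 = L
          · have hieq : i = L - 1 := by omega
            have hne : i ≠ L := by omega
            have hip : i % 2 = 0 := by omega
            rw [if_pos hip]
            show E (if i = L then b else f i) (if i + 1 = L then b else f (i + 1))
            rw [if_neg hne, if_pos hiL, hieq]
            exact hbS.2
          · have h2 : i + 1 < L := by omega
            have hi1 : i ≠ L := by omega
            have hi2 : i + 1 ≠ L := by omega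
            simp only [if_neg hi1, if_neg hi2]
            exact hedge i h2
      · -- v ∈ B, extend with an in-neighbour in A
        have hvB : v ∈ B := by have := hmem (L - 1) hvL; rwa [if_neg hpar] at this
        have hS : k + 1 ≤ (A ∩ {x | E x v}).ncard := by
          rw [← dirEdges_single_right]; exact hB v hvB
        obtain ⟨b, hbS, hbnew⟩ := fresh _ hS (by
          rintro ⟨-, hEb⟩; exact hloop v hEb)
        refine ⟨fun i => if i = L then b else f i, ?_, ?_, ?_⟩
        · intro i hi
          by_cases hiL : i = L
          · have hev : i % 2 = 0 := by omega
            rw [if_pos hev]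
            show (if i = L then b else f i) ∈ A
            rw [if_pos hiL]
            exact hbS.1
          · have hi' : i < L := by omega
            simp only [if_neg hiL]
            exact hmem i hi'
        · intro i j hi hj hij
          by_cases hiL : i = L <;> by_cases hjL : j = L
          · omega
          · subst hiL
            simp only [if_pos rfl, if_neg hjL] at hij
            exact absurd hij.symm (hbnew j (by omega))
          · subst hjL
            simp only [if_neg hiL, if_pos rfl] at hij
            exact absurd hij (hbnew i (by omega))
          · simp only [if_neg hiL, if_neg hjL] at hij
            exact hinj i j (by omega) (by omega) hij
        · intro i hi
          by_cases hiL : i + 1 = L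
          · have hieq : i = L - 1 := by omega
            have hne : i ≠ L := by omega
            have hip : ¬ i % 2 = 0 := by omega
            rw [if_neg hip]
            show E (if i + 1 = L then b else f (i + 1)) (if i = L then b else f i)
            rw [if_pos hiL, if_neg hne, hieq]
            exact hbS.2
          · have h2 : i + 1 < L := by omega
            have hi1 : i ≠ L := by omega
            have hi2 : i + 1 ≠ L := by omega
            simp only [if_neg hi1, if_neg hi2]
            exact hedge i h2

end helpers

theorem statement8 (V : Type) [Finite V] (E : V → V → Prop) (hloop : ∀ v, ¬ E v v)
    (c : ℝ) (hc : 0 < c) (X Y : Set V) (hX : X.Nonempty) (hY : Y.Nonempty)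
    (he : c * (X.ncard : ℝ) * (Y.ncard : ℝ) ≤ (dirEdges E X Y : ℝ)) :
    ∃ (m : ℕ) (f : ℕ → V), ProperADP E m f ∧
      (∀ i < 2 * m, f i ∈ X ∪ Y) ∧
      c / 4 * min (X.ncard : ℝ) (Y.ncard : ℝ) ≤ (2 * m : ℝ) := by
  have hX1 : 1 ≤ X.ncard := (Set.ncard_pos (Set.toFinite X)).2 hX
  have hY1 : 1 ≤ Y.ncard := (Set.ncard_pos (Set.toFinite Y)).2 hY
  have hXR : (1 : ℝ) ≤ (X.ncard : ℝ) := by exact_mod_cast hX1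
  have hYR : (1 : ℝ) ≤ (Y.ncard : ℝ) := by exact_mod_cast hY1
  set e := dirEdges E X Y with hedef
  have he1 : 1 ≤ e := by
    by_contra h
    have h0 : e = 0 := by omega
    rw [h0] at he
    have hx0 : (0 : ℝ) < (X.ncard : ℝ) := by linarith
    have hy0 : (0 : ℝ) < (Y.ncard : ℝ) := by linarith
    push_cast at he
    nlinarith [mul_pos (mul_pos hc hx0) hy0]
  obtain ⟨k, hks, hk1⟩ :
      ∃ k : ℕ, k * (X.ncard + Y.ncard) + 1 ≤ e ∧ e ≤ (k + 1) * (X.ncard + Y.ncard) := by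
    have hs : 0 < X.ncard + Y.ncard := by omega
    refine ⟨(e - 1) / (X.ncard + Y.ncard), ?_, ?_⟩
    · have := Nat.div_mul_le_self (e - 1) (X.ncard + Y.ncard)
      omega
    · have h1 := Nat.div_add_mod (e - 1) (X.ncard + Y.ncard)
      have h2 := Nat.mod_lt (e - 1) hs
      have h3 : ((e - 1) / (X.ncard + Y.ncard) + 1) * (X.ncard + Y.ncard)
          = (X.ncard + Y.ncard) * ((e - 1) / (X.ncard + Y.ncard)) + (X.ncard + Y.ncard) := by
        ring
      omega
  obtain ⟨A, B, hAX, hBY, hAB, hdA, hdB⟩ :=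
    deletion E k (X.ncard + Y.ncard) X Y le_rfl (by omega)
  have hABpos : dirEdges E A B ≠ 0 := by omega
  have hne : {p : V × V | p.1 ∈ A ∧ p.2 ∈ B ∧ E p.1 p.2}.Nonempty := by
    rw [dirEdges] at hABpos
    exact Set.nonempty_of_ncard_ne_zero hABpos
  obtain ⟨⟨a0, b0⟩, ha0, -, -⟩ := hne
  obtain ⟨m, hm1, hm2, hm3⟩ : ∃ m : ℕ, 1 ≤ m ∧ 2 * m ≤ k + 2 ∧ k + 1 ≤ 2 * m :=
    ⟨(k + 2) / 2, by omega, by omega, by omega⟩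
  obtain ⟨f, hmem, hinj, hedge⟩ :=
    greedy E hloop k A B hdA hdB a0 ha0 (2 * m) (by omega) hm2
  refine ⟨m, f, ⟨hm1, hinj, ?_⟩, ?_, ?_⟩
  · intro j hj
    constructor
    · have := hedge (2 * j) hj
      rwa [if_pos (by omega)] at this
    · intro h2
      have := hedge (2 * j + 1) h2
      rwa [if_neg (by omega)] at this
  · intro i hi
    have := hmem i hi
    by_cases h : i % 2 = 0
    · rw [if_pos h] at this; exact Or.inl (hAX this)
    · rw [if_neg h] at this; exact Or.inr (hBY this)
  · have h2m : ((k : ℝ) + 1) ≤ (2 * m : ℝ) := by exact_mod_cast hm3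
    have hes : (e : ℝ) ≤ ((k : ℝ) + 1) * ((X.ncard : ℝ) + (Y.ncard : ℝ)) := by
      exact_mod_cast hk1
    have hTnn : (0 : ℝ) ≤ (2 * m : ℝ) := by positivity
    have hchain : c * (X.ncard : ℝ) * (Y.ncard : ℝ) ≤
        (2 * m : ℝ) * ((X.ncard : ℝ) + (Y.ncard : ℝ)) := by
      calc c * (X.ncard : ℝ) * (Y.ncard : ℝ) ≤ (e : ℝ) := he
        _ ≤ ((k : ℝ) + 1) * ((X.ncard : ℝ) + (Y.ncard : ℝ)) := hes
        _ ≤ (2 * m : ℝ) * ((X.ncard : ℝ) + (Y.ncard : ℝ)) := by nlinarith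
    rcases le_total ((X.ncard : ℝ)) ((Y.ncard : ℝ)) with h | h
    · rw [min_eq_left h]
      nlinarith
    · rw [min_eq_right h]
      nlinarith
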